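/- Let G be a countable group, f strictly convex with f(1)=0, λ a generating probability measure on G. If κ is a probability measure on G fully supported with h_{λ,f}(κ) = I_{λ,f}(G) < ∞ (where G acts on itself by left translation), then G is finite and κ is the uniform measure. -/

import Mathlib

open MeasureTheory

/-- The `f`-divergence `D_f(η‖m)`, valued in `[0,∞]`. -/
noncomputable def fDivE {X : Type*} [MeasurableSpace X] (f : ℝ → ℝ)
    (η m : Measure X) : ENNReal :=
  ∫⁻ x, ENNReal.ofReal (f ((η.rnDeriv m x).toReal)) ∂m

/-- The Furstenberg `(λ,f)`-entropy `h_{λ,f}(ν) = Σ_g λ(g)·D_f(g⁻¹ν‖ν)`. -/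
noncomputable def fEntropy {G X : Type*} [Group G] [MeasurableSpace X]
    [MulAction G X] (f : ℝ → ℝ) (lam : G → ℝ) (ν : Measure X) : ENNReal :=
  ∑' g : G, ENNReal.ofReal (lam g) * fDivE f (ν.map (fun x => g⁻¹ • x)) ν

open ENNReal

private lemma key_lt {f : ℝ → ℝ} (hf : StrictConvexOn ℝ (Set.Ioi (0:ℝ)) f)
    {a b c d : ℝ} (ha : 0 < a) (hb : 0 < b) (hc : 0 < c) (hd : 0 < d)
    (hne : c / a ≠ d / b) :
    (a + b) * f ((c + d) / (a + b)) < a * f (c / a) + b * f (d / b) := by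
  have hab : 0 < a + b := by linarith
  have ht : (0:ℝ) < a / (a + b) := by positivity
  have hs : (0:ℝ) < b / (a + b) := by positivity
  have hts : a / (a + b) + b / (a + b) = 1 := by field_simp
  have hx : c / a ∈ Set.Ioi (0:ℝ) := by simp [Set.mem_Ioi]; positivity
  have hy : d / b ∈ Set.Ioi (0:ℝ) := by simp [Set.mem_Ioi]; positivity
  have key := hf.2 hx hy hne ht hs hts
  simp only [smul_eq_mul] at key
  have harg : (a / (a + b)) * (c / a) + (b / (a + b)) * (d / b) = (c + d) / (a + b) := by
    field_simp
  rw [harg] at key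
  have h2 := mul_lt_mul_of_pos_left key hab
  calc (a + b) * f ((c + d) / (a + b)) < (a + b) * (a / (a + b) * f (c / a) + b / (a + b) * f (d / b)) := h2
    _ = a * f (c / a) + b * f (d / b) := by field_simp

private lemma key_le {f : ℝ → ℝ} (hf : StrictConvexOn ℝ (Set.Ioi (0:ℝ)) f)
    {a b c d : ℝ} (ha : 0 < a) (hb : 0 < b) (hc : 0 < c) (hd : 0 < d) :
    (a + b) * f ((c + d) / (a + b)) ≤ a * f (c / a) + b * f (d / b) := by
  by_cases hne : c / a = d / b
  · have hd' : d = (c / a) * b := by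
      field_simp at hne ⊢; linarith [hne]
    have harg : (c + d) / (a + b) = c / a := by
      rw [hd']; field_simp
    rw [harg, ← hne]
    exact le_of_eq (by ring)
  · exact (key_lt hf ha hb hc hd hne).le

private lemma fDivE_eq_tsum {G : Type*} [Group G] [Countable G] [MeasurableSpace G]
    [MeasurableSingletonClass G] (f : ℝ → ℝ) (μ : Measure G) [SigmaFinite μ]
    (hsupp : ∀ x : G, μ {x} ≠ 0) (hfinμ : ∀ x : G, μ {x} ≠ ⊤) (g : G) :
    fDivE f (μ.map (fun x => g⁻¹ • x)) μ
      = ∑' x : G, ENNReal.ofReal (f ((μ {g * x} / μ {x}).toReal)) * μ {x} := by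
  have hw : Measurable (fun x : G => μ {g * x} / μ {x}) := measurable_of_countable _
  have hmap : μ.map (fun x : G => g⁻¹ • x)
      = μ.withDensity (fun x => μ {g * x} / μ {x}) := by
    refine Measure.ext_of_singleton fun x => ?_
    rw [Measure.map_apply (measurable_of_countable _) (measurableSet_singleton x),
      withDensity_apply _ (measurableSet_singleton x)]
    have hpre : (fun y : G => g⁻¹ • y) ⁻¹' {x} = {g * x} := by
      ext y
      simp [smul_eq_mul, eq_comm, eq_inv_mul_iff_mul_eq]
    rw [hpre, lintegral_singleton, ENNReal.div_mul_cancel (hsupp x) (hfinμ x)]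
  rw [hmap, fDivE]
  have hae := Measure.rnDeriv_withDensity μ hw
  have : ∫⁻ x, ENNReal.ofReal (f ((((μ.withDensity fun x => μ {g * x} / μ {x}).rnDeriv μ) x).toReal)) ∂μ
      = ∫⁻ x, ENNReal.ofReal (f ((μ {g * x} / μ {x}).toReal)) ∂μ := by
    refine lintegral_congr_ae ?_
    filter_upwards [hae] with x hx
    rw [hx]
  rw [this, lintegral_countable']

private lemma fEntropy_eq_tsum {G : Type*} [Group G] [Countable G] [MeasurableSpace G]
    [MeasurableSingletonClass G] (f : ℝ → ℝ) (lam : G → ℝ) (μ : Measure G) [SigmaFinite μ]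
    (hsupp : ∀ x : G, μ {x} ≠ 0) (hfinμ : ∀ x : G, μ {x} ≠ ⊤) :
    fEntropy f lam μ
      = ∑' g : G, ENNReal.ofReal (lam g) *
          ∑' x : G, ENNReal.ofReal (f ((μ {g * x} / μ {x}).toReal)) * μ {x} := by
  unfold fEntropy
  exact tsum_congr fun g => by rw [fDivE_eq_tsum f μ hsupp hfinμ g]

/-- If a fully supported probability measure `κ` on a countable group `G`
attains the infimum `I_{λ,f}(G) < ∞` (for `f` strictly convex with `f 1 = 0`
and `λ` generating), then `G` is finite and `κ` is the uniform measure. -/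
theorem finite_of_entropy_minimizer {G : Type*} [Group G] [Countable G]
    [MeasurableSpace G] [MeasurableSingletonClass G]
    (f : ℝ → ℝ) (hf : StrictConvexOn ℝ (Set.Ioi (0:ℝ)) f) (hf1 : f 1 = 0)
    (hfpos : ∀ x ∈ Set.Ioi (0:ℝ), 0 ≤ f x)
    (lam : G → ℝ) (hlam0 : ∀ g, 0 ≤ lam g) (hlam1 : ∑' g, lam g = 1)
    (hgen : Subgroup.closure {g : G | lam g ≠ 0} = ⊤)
    (κ : Measure G) [IsProbabilityMeasure κ] (hsupp : ∀ g : G, κ {g} ≠ 0)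
    (hfin : fEntropy f lam κ ≠ ⊤)
    (hmin : fEntropy f lam κ =
      ⨅ κ' : {κ' : Measure G // IsProbabilityMeasure κ' ∧ ∀ g : G, κ' {g} ≠ 0},
        fEntropy f lam (κ' : Measure G)) :
    Finite G ∧ ∀ g : G, κ {g} = ((Nat.card G : ENNReal))⁻¹ := by
  classical
  set u : G → ℝ := fun x => (κ {x}).toReal with hu
  have hupos : ∀ x, 0 < u x := fun x => ENNReal.toReal_pos (hsupp x) (measure_ne_top κ _)
  have hκx : ∀ x, κ {x} = ENNReal.ofReal (u x) :=
    fun x => (ENNReal.ofReal_toReal (measure_ne_top κ _)).symm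
  have hfpos' : ∀ {a b : ℝ}, 0 < a → 0 < b → 0 ≤ f (a / b) :=
    fun ha hb => hfpos _ (Set.mem_Ioi.mpr (div_pos ha hb))
  -- the entropy of κ as a concrete sum
  have hκsum : fEntropy f lam κ
      = ∑' g : G, ENNReal.ofReal (lam g) *
          ∑' x : G, ENNReal.ofReal (f (u (g * x) / u x) * u x) := by
    rw [fEntropy_eq_tsum f lam κ hsupp (fun x => measure_ne_top κ _)]
    refine tsum_congr fun g => ?_
    congr 1
    refine tsum_congr fun x => ?_
    rw [ENNReal.toReal_div, ENNReal.ofReal_mul (hfpos' (hupos _) (hupos _)), hκx x,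
      ENNReal.toReal_ofReal (hupos x).le]
  -- total mass one as a sum
  have htot : ∑' x : G, κ {x} = 1 := by
    have h1 : ∫⁻ _, (1 : ℝ≥0∞) ∂κ = 1 := by simp
    rw [lintegral_countable'] at h1
    simpa using h1
  -- KEY STEP: ratio invariance from minimality
  have hinv : ∀ h g : G, lam g ≠ 0 → ∀ x : G,
      u (g * x) / u x = u (g * (x * h)) / u (x * h) := by
    intro h
    -- the right-translated measure
    set κh : Measure G := κ.map (fun x => x * h⁻¹) with hκhdef
    haveI hκhprob : IsProbabilityMeasure κh := by
      rw [hκhdef]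
      exact Measure.isProbabilityMeasure_map (measurable_of_countable _).aemeasurable
    have hκhx : ∀ x : G, κh {x} = κ {x * h} := by
      intro x
      rw [hκhdef, Measure.map_apply (measurable_of_countable _) (measurableSet_singleton x)]
      congr 1
      ext y
      simp [mul_inv_eq_iff_eq_mul]
    -- the midpoint measure ν
    set ν : Measure G := (2 : ℝ≥0∞)⁻¹ • κ + (2 : ℝ≥0∞)⁻¹ • κh with hνdef
    set v : G → ℝ := fun x => (u x + u (x * h)) / 2 with hv
    have hvpos : ∀ x, 0 < v x := by
      intro x
      have h1 := hupos x
      have h2 := hupos (x * h)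
      simp only [hv]
      positivity
    have hνx : ∀ x : G, ν {x} = ENNReal.ofReal (v x) := by
      intro x
      have hsplit : ENNReal.ofReal (v x)
          = (ENNReal.ofReal (u x) + ENNReal.ofReal (u (x * h))) / 2 := by
        simp only [hv]
        rw [ENNReal.ofReal_div_of_pos two_pos,
          ENNReal.ofReal_add (hupos x).le (hupos _).le]
        norm_num
      rw [hνdef, hsplit]
      simp only [Measure.add_apply, Measure.smul_apply, smul_eq_mul, hκhx, ← hκx]
      rw [ENNReal.add_div]
      rw [div_eq_mul_inv, div_eq_mul_inv, mul_comm, mul_comm (κ {x * h}) 2⁻¹]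
    haveI hνprob : IsProbabilityMeasure ν := by
      constructor
      rw [hνdef]
      simp only [Measure.add_apply, Measure.smul_apply, smul_eq_mul, measure_univ, mul_one]
      exact ENNReal.inv_two_add_inv_two
    have hνsupp : ∀ x : G, ν {x} ≠ 0 := fun x => by
      rw [hνx]; exact (ENNReal.ofReal_pos.mpr (hvpos x)).ne'
    -- entropy of ν as a concrete sum
    have hνsum : fEntropy f lam ν
        = ∑' g : G, ENNReal.ofReal (lam g) *
            ∑' x : G, ENNReal.ofReal (f (v (g * x) / v x) * v x) := by
      rw [fEntropy_eq_tsum f lam ν hνsupp (fun x => measure_ne_top ν _)]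
      refine tsum_congr fun g => ?_
      congr 1
      refine tsum_congr fun x => ?_
      rw [hνx, hνx, ENNReal.toReal_div, ENNReal.toReal_ofReal (hvpos _).le,
        ENNReal.toReal_ofReal (hvpos _).le,
        ENNReal.ofReal_mul (hfpos' (hvpos _) (hvpos _))]
    -- termwise comparison
    set A : G × G → ℝ≥0∞ := fun p =>
      ENNReal.ofReal (lam p.1) * ENNReal.ofReal (f (v (p.1 * p.2) / v p.2) * v p.2) with hA
    set B : G × G → ℝ≥0∞ := fun p =>
      ENNReal.ofReal (lam p.1) *
        ((ENNReal.ofReal (f (u (p.1 * p.2) / u p.2) * u p.2)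
          + ENNReal.ofReal (f (u (p.1 * (p.2 * h)) / u (p.2 * h)) * u (p.2 * h))) / 2) with hB
    -- the midpoint fraction identity
    have hfrac : ∀ g x : G, v (g * x) / v x
        = (u (g * x) + u (g * (x * h))) / (u x + u (x * h)) := by
      intro g x
      have hnum : v (g * x) = (u (g * x) + u (g * (x * h))) / 2 := by
        simp only [hv, mul_assoc]
      have hden : v x = (u x + u (x * h)) / 2 := rfl
      rw [hnum, hden]
      have hab : u x + u (x * h) ≠ 0 := by
        have := hupos x; have := hupos (x * h); positivity
      field_simp
    -- the ENNReal half-sum identity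
    have hhalf : ∀ s t : ℝ, 0 ≤ s → 0 ≤ t →
        (ENNReal.ofReal s + ENNReal.ofReal t) / 2 = ENNReal.ofReal ((s + t) / 2) := by
      intro s t hs ht
      rw [ENNReal.ofReal_div_of_pos two_pos, ENNReal.ofReal_add hs ht]
      norm_num
    have hAB : ∀ p : G × G, A p ≤ B p := by
      rintro ⟨g, x⟩
      simp only [hA, hB]
      refine mul_le_mul_right ?_ _
      rw [hhalf _ _ (mul_nonneg (hfpos' (hupos _) (hupos _)) (hupos _).le)
        (mul_nonneg (hfpos' (hupos _) (hupos _)) (hupos _).le)]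
      refine ENNReal.ofReal_le_ofReal ?_
      rw [hfrac g x]
      have hk := key_le hf (hupos x) (hupos (x * h)) (hupos (g * x)) (hupos (g * (x * h)))
      have hvx : v x = (u x + u (x * h)) / 2 := rfl
      rw [hvx]
      nlinarith [hk]
    -- sum identifications
    have hAsum : ∑' p : G × G, A p = fEntropy f lam ν := by
      rw [hνsum, ENNReal.tsum_prod']
      exact tsum_congr fun g => by simp only [hA]; exact ENNReal.tsum_mul_left
    have hBsum : ∑' p : G × G, B p = fEntropy f lam κ := by
      rw [hκsum, ENNReal.tsum_prod']
      refine tsum_congr fun g => ?_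
      simp only [hB]
      rw [ENNReal.tsum_mul_left]
      congr 1
      have hre : ∑' x : G, ENNReal.ofReal (f (u (g * (x * h)) / u (x * h)) * u (x * h))
          = ∑' x : G, ENNReal.ofReal (f (u (g * x) / u x) * u x) := by
        have := (Equiv.mulRight h).tsum_eq
          (fun y => ENNReal.ofReal (f (u (g * y) / u y) * u y))
        simpa using this
      calc ∑' x : G, (ENNReal.ofReal (f (u (g * x) / u x) * u x)
              + ENNReal.ofReal (f (u (g * (x * h)) / u (x * h)) * u (x * h))) / 2
          = (∑' x : G, (ENNReal.ofReal (f (u (g * x) / u x) * u x)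
              + ENNReal.ofReal (f (u (g * (x * h)) / u (x * h)) * u (x * h)))) / 2 := by
            simp only [div_eq_mul_inv]
            exact ENNReal.tsum_mul_right
        _ = (∑' x : G, ENNReal.ofReal (f (u (g * x) / u x) * u x)
              + ∑' x : G, ENNReal.ofReal (f (u (g * (x * h)) / u (x * h)) * u (x * h))) / 2 := by
            rw [ENNReal.tsum_add]
        _ = ∑' x : G, ENNReal.ofReal (f (u (g * x) / u x) * u x) := by
            rw [hre, ENNReal.add_div, ENNReal.add_halves]
    -- minimality forces equality of the two sums
    have hle : fEntropy f lam κ ≤ fEntropy f lam ν := by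
      rw [hmin]
      exact iInf_le
        (fun κ' : {κ' : Measure G // IsProbabilityMeasure κ' ∧ ∀ g : G, κ' {g} ≠ 0} =>
          fEntropy f lam (κ' : Measure G)) ⟨ν, hνprob, hνsupp⟩
    have hABsum : ∑' p : G × G, A p = ∑' p : G × G, B p := by
      refine le_antisymm (ENNReal.tsum_le_tsum hAB) ?_
      rw [hAsum, hBsum]
      exact hle
    have hBfin : ∑' p : G × G, B p ≠ ⊤ := by rw [hBsum]; exact hfin
    have hpt : ∀ p : G × G, A p = B p := by
      intro p
      by_contra hne
      have hlt := lt_of_le_of_ne (hAB p) hne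
      have : ∑' q : G × G, A q < ∑' q : G × G, B q :=
        ENNReal.tsum_lt_tsum (by rw [hABsum]; exact hBfin) hAB hlt
      rw [hABsum] at this
      exact lt_irrefl _ this
    intro g hg x
    by_contra hner
    have hlamgpos : 0 < lam g := lt_of_le_of_ne (hlam0 g) (Ne.symm hg)
    have hkl := key_lt hf (hupos x) (hupos (x * h)) (hupos (g * x)) (hupos (g * (x * h))) hner
    have hstrict : f (v (g * x) / v x) * v x
        < (f (u (g * x) / u x) * u x + f (u (g * (x * h)) / u (x * h)) * u (x * h)) / 2 := by
      rw [hfrac g x]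
      have hvx : v x = (u x + u (x * h)) / 2 := rfl
      rw [hvx]
      nlinarith [hkl]
    have hLnn : 0 ≤ f (v (g * x) / v x) * v x :=
      mul_nonneg (hfpos' (hvpos _) (hvpos _)) (hvpos _).le
    have hlt2 : A (g, x) < B (g, x) := by
      simp only [hA, hB]
      rw [hhalf _ _ (mul_nonneg (hfpos' (hupos _) (hupos _)) (hupos _).le)
        (mul_nonneg (hfpos' (hupos _) (hupos _)) (hupos _).le)]
      refine ENNReal.mul_lt_mul_right (ENNReal.ofReal_pos.mpr hlamgpos).ne'
        ENNReal.ofReal_ne_top ?_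
      exact (ENNReal.ofReal_lt_ofReal_iff (lt_of_le_of_lt hLnn hstrict)).mpr hstrict
    rw [hpt (g, x)] at hlt2
    exact lt_irrefl _ hlt2
  -- from ratio invariance: κ is invariant under generators
  have hTinv : ∀ g : G, lam g ≠ 0 → ∀ x : G, κ {g * x} = κ {x} := by
    intro g hg x
    have h1 : ∀ h : G, u (g * h) / u h = u g / u 1 := by
      intro h
      have := hinv h g hg 1
      simpa using this.symm
    have hc : ∀ h : G, κ {g * h} = ENNReal.ofReal (u g / u 1) * κ {h} := by
      intro h
      have : u (g * h) = (u g / u 1) * u h := by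
        rw [← h1 h, div_mul_cancel₀ _ (hupos h).ne']
      rw [hκx (g * h), this, ENNReal.ofReal_mul (by positivity), ← hκx h]
    have hsum1 : ∑' h : G, κ {g * h} = 1 := by
      have := (Equiv.mulLeft g).tsum_eq (fun y => κ {y})
      simpa [htot] using this
    have : ENNReal.ofReal (u g / u 1) = 1 := by
      rw [tsum_congr hc, ENNReal.tsum_mul_left, htot, mul_one] at hsum1
      exact hsum1
    have hc1 : u g / u 1 = 1 := by
      have := congrArg ENNReal.toReal this
      rwa [ENNReal.toReal_ofReal (by positivity), ENNReal.toReal_one] at this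
    have := hc x
    rw [hc1] at this
    simpa using this
  -- invariance for the full group via the generating hypothesis
  have hT : ∀ g x : G, κ {g * x} = κ {x} := by
    intro g x
    let T : Subgroup G :=
      { carrier := {g : G | ∀ x : G, κ {g * x} = κ {x}}
        one_mem' := by intro x; simp
        mul_mem' := by
          intro a b ha hb x
          have : a * b * x = a * (b * x) := mul_assoc a b x
          rw [this, ha (b * x), hb x]
        inv_mem' := by
          intro a ha x
          have := ha (a⁻¹ * x)
          rwa [mul_inv_cancel_left, eq_comm] at this }
    have hST : {g : G | lam g ≠ 0} ⊆ (T : Set G) := fun g hg => hTinv g hg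
    have : (⊤ : Subgroup G) ≤ T := by
      rw [← hgen]; exact (Subgroup.closure_le T).mpr hST
    exact this (Subgroup.mem_top g) x
  have hconst : ∀ x : G, κ {x} = κ {(1 : G)} := by
    intro x
    have := hT x 1
    simpa using this
  -- finiteness
  have hGfin : Finite G := by
    by_contra hinf
    rw [not_finite_iff_infinite] at hinf
    have htop : ∑' _ : G, κ {(1 : G)} = ⊤ :=
      ENNReal.tsum_const_eq_top_of_ne_zero (hsupp 1)
    rw [tsum_congr hconst, htop] at htot
    exact ENNReal.top_ne_one htot
  refine ⟨hGfin, ?_⟩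
  haveI := Fintype.ofFinite G
  have hcard : (Nat.card G : ℝ≥0∞) * κ {(1 : G)} = 1 := by
    rw [← htot, tsum_congr hconst, tsum_fintype, Finset.sum_const, Finset.card_univ,
      nsmul_eq_mul, Nat.card_eq_fintype_card]
  have hc0 : (Nat.card G : ℝ≥0∞) ≠ 0 := by
    simp [Nat.card_eq_fintype_card, Fintype.card_ne_zero]
  have hctop : (Nat.card G : ℝ≥0∞) ≠ ⊤ := ENNReal.natCast_ne_top _
  intro g
  rw [hconst g, ← one_mul (κ {(1:G)}), ← ENNReal.inv_mul_cancel hc0 hctop, mul_assoc, hcard,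
    mul_one]
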